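/- Let 𝒫 be any of the properties SBrSNNI, P_BrNDC, SBrNDC. If P ∈ 𝒫, then a.P ∈ 𝒫 for every action a ∈ A_L ∪ {τ} (the local branching-bisimilarity-based noninterference properties are compositional with respect to low/unobservable action prefix). -/
import Mathlib


namespace SecurityNI

/-- Process terms: `0`, action prefix (`none` = τ, `some a` = observable action),
choice, CSP-style parallel composition with synchronization set, restriction,
hiding, and constants (whose defining equations are given by an environment). -/
inductive Proc (A : Type) (C : Type) : Type where
  | nil : Proc A C
  | pre : Option A → Proc A C → Proc A C
  | choice : Proc A C → Proc A C → Proc A C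
  | par : Set A → Proc A C → Proc A C → Proc A C
  | restrict : Proc A C → Set A → Proc A C
  | hide : Proc A C → Set A → Proc A C
  | const : C → Proc A C

variable {A C : Type}

/-- A process term is guarded when every constant occurrence is in the scope
of an action prefix operator. -/
def Guarded : Proc A C → Prop
  | .nil => True
  | .pre _ _ => True
  | .choice p q => Guarded p ∧ Guarded q
  | .par _ p q => Guarded p ∧ Guarded q
  | .restrict p _ => Guarded p
  | .hide p _ => Guarded p
  | .const _ => False

/-- Operational semantics, parameterized by the defining equations `env` of
the constants.  Labels are `Option A`, with `none` playing the role of τ. -/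
inductive Trans (env : C → Proc A C) : Proc A C → Option A → Proc A C → Prop where
  | pre (a : Option A) (p : Proc A C) : Trans env (.pre a p) a p
  | choiceL {p q a p'} (h : Trans env p a p') : Trans env (.choice p q) a p'
  | choiceR {p q a q'} (h : Trans env q a q') : Trans env (.choice p q) a q'
  | parL {L p q a p'} (h : Trans env p a p') (hn : ∀ x, a = some x → x ∉ L) :
      Trans env (.par L p q) a (.par L p' q)
  | parR {L p q a q'} (h : Trans env q a q') (hn : ∀ x, a = some x → x ∉ L) :
      Trans env (.par L p q) a (.par L p q')
  | sync {L p q x p' q'} (h1 : Trans env p (some x) p') (h2 : Trans env q (some x) q')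
      (hx : x ∈ L) : Trans env (.par L p q) (some x) (.par L p' q')
  | res {p a p' L} (h : Trans env p a p') (hn : ∀ x, a = some x → x ∉ L) :
      Trans env (.restrict p L) a (.restrict p' L)
  | hideIn {p x p' L} (h : Trans env p (some x) p') (hx : x ∈ L) :
      Trans env (.hide p L) none (.hide p' L)
  | hideOut {p a p' L} (h : Trans env p a p') (hn : ∀ x, a = some x → x ∉ L) :
      Trans env (.hide p L) a (.hide p' L)
  | const {c a p'} (h : Trans env (env c) a p') : Trans env (.const c) a p'

section LTS

variable {S : Type} (tr : S → Option A → S → Prop)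

/-- Finitely many (possibly zero) τ-transitions. -/
def TauStar : S → S → Prop :=
  Relation.ReflTransGen (fun s s' => tr s none s')

/-- `B` is a branching bisimulation. -/
def IsBranchingBisim (B : S → S → Prop) : Prop :=
  Symmetric B ∧
    ∀ s1 s2, B s1 s2 → ∀ a s1', tr s1 a s1' →
      (a = none ∧ B s1' s2) ∨
      (∃ s2b s2', TauStar tr s2 s2b ∧ tr s2b a s2' ∧ B s1 s2b ∧ B s1' s2')

/-- Branching bisimilarity `≈_b`. -/
def BrBisim (s1 s2 : S) : Prop :=
  ∃ B, IsBranchingBisim tr B ∧ B s1 s2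

/-- `B` is a weak bisimulation. -/
def IsWeakBisim (B : S → S → Prop) : Prop :=
  Symmetric B ∧
    ∀ s1 s2, B s1 s2 →
      (∀ s1', tr s1 none s1' → ∃ s2', TauStar tr s2 s2' ∧ B s1' s2') ∧
      (∀ x s1', tr s1 (some x) s1' →
        ∃ t t' s2', TauStar tr s2 t ∧ tr t (some x) t' ∧ TauStar tr t' s2' ∧ B s1' s2')

/-- Weak bisimilarity `≈`. -/
def WeakBisim (s1 s2 : S) : Prop :=
  ∃ B, IsWeakBisim tr B ∧ B s1 s2

/-- Reachability via finitely many transitions. -/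
def Reach : S → S → Prop :=
  Relation.ReflTransGen (fun s s' => ∃ a, tr s a s')

end LTS

section Security

variable (env : C → Proc A C) (AH : Set A)

/-- `P ∈ BrSNNI` iff `P∖A_H ≈_b P/A_H`. -/
def BrSNNI (p : Proc A C) : Prop :=
  BrBisim (Trans env) (.restrict p AH) (.hide p AH)

/-- All processes reachable from `q` perform only actions in `AH`. -/
def HighOnly (q : Proc A C) : Prop :=
  ∀ q', Reach (Trans env) q q' → ∀ a q'', Trans env q' a q'' → ∃ h ∈ AH, a = some h

/-- `P ∈ BrNDC` iff `P∖A_H ≈_b ((P ∥_L Q)/L)∖A_H` for every high-level `Q`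
and every `L ⊆ A_H`. -/
def BrNDC (p : Proc A C) : Prop :=
  ∀ q, HighOnly env AH q → ∀ L, L ⊆ AH →
    BrBisim (Trans env) (.restrict p AH) (.restrict (.hide (.par L p q) L) AH)

/-- `P ∈ SBrSNNI` iff every reachable process is BrSNNI. -/
def SBrSNNI (p : Proc A C) : Prop :=
  ∀ p', Reach (Trans env) p p' → BrSNNI env AH p'

/-- `P ∈ P_BrNDC` iff every reachable process is BrNDC. -/
def PBrNDC (p : Proc A C) : Prop :=
  ∀ p', Reach (Trans env) p p' → BrNDC env AH p'

/-- `P ∈ SBrNDC` iff for every reachable `P'` and every high transition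
`P' --h→ P''`, `P'∖A_H ≈_b P''∖A_H`. -/
def SBrNDC (p : Proc A C) : Prop :=
  ∀ p' p'', Reach (Trans env) p p' → ∀ h ∈ AH, Trans env p' (some h) p'' →
    BrBisim (Trans env) (.restrict p' AH) (.restrict p'' AH)

/-- `P ∈ BSNNI` iff `P∖A_H ≈ P/A_H`. -/
def BSNNI (p : Proc A C) : Prop :=
  WeakBisim (Trans env) (.restrict p AH) (.hide p AH)

/-- `P ∈ BNDC` iff `P∖A_H ≈ ((P ∥_L Q)/L)∖A_H` for every high-level `Q`
and every `L ⊆ A_H`. -/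
def BNDC (p : Proc A C) : Prop :=
  ∀ q, HighOnly env AH q → ∀ L, L ⊆ AH →
    WeakBisim (Trans env) (.restrict p AH) (.restrict (.hide (.par L p q) L) AH)

/-- `P ∈ SBSNNI` iff every reachable process is BSNNI. -/
def SBSNNI (p : Proc A C) : Prop :=
  ∀ p', Reach (Trans env) p p' → BSNNI env AH p'

/-- `P ∈ P_BNDC` iff every reachable process is BNDC. -/
def PBNDC (p : Proc A C) : Prop :=
  ∀ p', Reach (Trans env) p p' → BNDC env AH p'

/-- `P ∈ SBNDC` iff for every reachable `P'` and every high transition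
`P' --h→ P''`, `P'∖A_H ≈ P''∖A_H`. -/
def SBNDC (p : Proc A C) : Prop :=
  ∀ p' p'', Reach (Trans env) p p' → ∀ h ∈ AH, Trans env p' (some h) p'' →
    WeakBisim (Trans env) (.restrict p' AH) (.restrict p'' AH)

/-- No high-level actions occur in `p`: no process reachable from `p`
can perform a high-level action. -/
def NoHigh (p : Proc A C) : Prop :=
  ∀ p', Reach (Trans env) p p' → ∀ h ∈ AH, ∀ p'', ¬ Trans env p' (some h) p''

end Security

section Aux

variable {S : Type} {tr : S → Option A → S → Prop}

/-- Branching bisimilarity is itself a branching bisimulation. -/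
lemma isBisim_brBisim (tr : S → Option A → S → Prop) :
    IsBranchingBisim tr (BrBisim tr) := by
  constructor
  · rintro s t ⟨B, hB, hst⟩
    exact ⟨B, hB, hB.1 hst⟩
  · rintro s1 s2 ⟨B, hB, h12⟩ b s1' hstep
    rcases hB.2 s1 s2 h12 b s1' hstep with ⟨rfl, h⟩ | ⟨s2b, s2', h1, h2, h3, h4⟩
    · exact Or.inl ⟨rfl, B, hB, h⟩
    · exact Or.inr ⟨s2b, s2', h1, h2, ⟨B, hB, h3⟩, ⟨B, hB, h4⟩⟩

lemma brBisim_symm {s t : S} (h : BrBisim tr s t) : BrBisim tr t s :=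
  (isBisim_brBisim tr).1 h

end Aux

variable {env : C → Proc A C} {AH : Set A}

lemma trans_pre_inv {a b : Option A} {P s : Proc A C}
    (h : Trans env (.pre a P) b s) : b = a ∧ s = P := by
  cases h; exact ⟨rfl, rfl⟩

lemma reach_pre_inv {a : Option A} {P s : Proc A C}
    (h : Reach (Trans env) (.pre a P) s) :
    s = .pre a P ∨ Reach (Trans env) P s := by
  rcases Relation.ReflTransGen.cases_head h with h | ⟨c, ⟨b, hstep⟩, hrest⟩
  · exact Or.inl h.symm
  · rcases trans_pre_inv hstep with ⟨rfl, rfl⟩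
    exact Or.inr hrest

lemma highOnly_reach {q q' : Proc A C} (hq : HighOnly env AH q)
    (h : Reach (Trans env) q q') : HighOnly env AH q' :=
  fun q'' hr => hq q'' (h.trans hr)

/-- BrSNNI is preserved by low/τ prefixing. -/
lemma brSNNI_pre {a : Option A} (ha : ∀ x, a = some x → x ∉ AH) {P : Proc A C}
    (hP : BrSNNI env AH P) : BrSNNI env AH (Proc.pre a P) := by
  classical
  refine ⟨fun s t => BrBisim (Trans env) s t ∨
      (s = Proc.restrict (.pre a P) AH ∧ t = Proc.hide (.pre a P) AH) ∨
      (s = Proc.hide (.pre a P) AH ∧ t = Proc.restrict (.pre a P) AH),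
    ⟨?_, ?_⟩, Or.inr (Or.inl ⟨rfl, rfl⟩)⟩
  · rintro s t (h | ⟨rfl, rfl⟩ | ⟨rfl, rfl⟩)
    · exact Or.inl (brBisim_symm h)
    · exact Or.inr (Or.inr ⟨rfl, rfl⟩)
    · exact Or.inr (Or.inl ⟨rfl, rfl⟩)
  · rintro s1 s2 (h | ⟨rfl, rfl⟩ | ⟨rfl, rfl⟩) b s1' hstep
    · rcases (isBisim_brBisim (Trans env)).2 s1 s2 h b s1' hstep with ⟨rfl, h'⟩ |
        ⟨s2b, s2', h1, h2, h3, h4⟩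
      · exact Or.inl ⟨rfl, Or.inl h'⟩
      · exact Or.inr ⟨s2b, s2', h1, h2, Or.inl h3, Or.inl h4⟩
    · -- s1 = r
      cases hstep with
      | res hin hn =>
      rcases trans_pre_inv hin with ⟨rfl, rfl⟩
      refine Or.inr ⟨_, _, Relation.ReflTransGen.refl,
        Trans.hideOut (Trans.pre _ _) ha, Or.inr (Or.inl ⟨rfl, rfl⟩), Or.inl hP⟩
    · -- s1 = h0
      cases hstep with
      | hideIn hin hx =>
        rcases trans_pre_inv hin with ⟨ha', rfl⟩
        exact absurd hx (ha _ ha'.symm)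
      | hideOut hin hn =>
        rcases trans_pre_inv hin with ⟨rfl, rfl⟩
        refine Or.inr ⟨_, _, Relation.ReflTransGen.refl,
          Trans.res (Trans.pre _ _) ha, Or.inr (Or.inr ⟨rfl, rfl⟩),
          Or.inl (brBisim_symm hP)⟩

/-- BrNDC is preserved by low/τ prefixing, assuming the continuation is
PBrNDC (in fact only its BrNDC for arbitrary high environments is used). -/
lemma brNDC_pre {a : Option A} (ha : ∀ x, a = some x → x ∉ AH) {P : Proc A C}
    (hP : BrNDC env AH P) : BrNDC env AH (Proc.pre a P) := by
  classical
  intro q hq L hL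
  have hnL : ∀ x, a = some x → x ∉ L := fun x hx hxL => ha x hx (hL hxL)
  refine ⟨fun s t => BrBisim (Trans env) s t ∨
      (∃ q', HighOnly env AH q' ∧ s = Proc.restrict (.pre a P) AH ∧
        t = .restrict (.hide (.par L (.pre a P) q') L) AH) ∨
      (∃ q', HighOnly env AH q' ∧ t = Proc.restrict (.pre a P) AH ∧
        s = .restrict (.hide (.par L (.pre a P) q') L) AH),
    ⟨?_, ?_⟩, Or.inr (Or.inl ⟨q, hq, rfl, rfl⟩)⟩
  · rintro s t (h | ⟨q', hq', rfl, rfl⟩ | ⟨q', hq', rfl, rfl⟩)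
    · exact Or.inl (brBisim_symm h)
    · exact Or.inr (Or.inr ⟨q', hq', rfl, rfl⟩)
    · exact Or.inr (Or.inl ⟨q', hq', rfl, rfl⟩)
  · rintro s1 s2 (h | ⟨q', hq', rfl, rfl⟩ | ⟨q', hq', rfl, rfl⟩) b s1' hstep
    · rcases (isBisim_brBisim (Trans env)).2 s1 s2 h b s1' hstep with ⟨rfl, h'⟩ |
        ⟨s2b, s2', h1, h2, h3, h4⟩
      · exact Or.inl ⟨rfl, Or.inl h'⟩
      · exact Or.inr ⟨s2b, s2', h1, h2, Or.inl h3, Or.inl h4⟩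
    · -- s1 = r,  s2 = restrict (hide (par L (pre a P) q') L) AH
      cases hstep with
      | res hin hn =>
      rcases trans_pre_inv hin with ⟨rfl, rfl⟩
      refine Or.inr ⟨_, _, Relation.ReflTransGen.refl,
        Trans.res (Trans.hideOut (Trans.parL (Trans.pre _ _) hnL) hnL) ha,
        Or.inr (Or.inl ⟨_, hq', rfl, rfl⟩), Or.inl (hP _ hq' _ hL)⟩
    · -- s1 = restrict (hide (par L (pre a P) q') L) AH,  s2 = r
      cases hstep with
      | res hin hnAH =>
      cases hin with
      | hideIn hpar hxL =>
        -- τ move from a sync-set action of the par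
        cases hpar with
        | parL hstep' hn' =>
          rcases trans_pre_inv hstep' with ⟨ha', rfl⟩
          exact absurd (hL hxL) (ha _ ha'.symm)
        | parR hstep' hn' =>
          exact Or.inl ⟨rfl, Or.inr (Or.inr ⟨_, highOnly_reach hq'
            (Relation.ReflTransGen.single ⟨_, hstep'⟩), rfl, rfl⟩)⟩
        | sync h1 h2 hx =>
          rcases trans_pre_inv h1 with ⟨ha', rfl⟩
          exact absurd (hL hx) (ha _ ha'.symm)
      | hideOut hpar hnotL =>
        cases hpar with
        | parL hstep' hn' =>
          rcases trans_pre_inv hstep' with ⟨rfl, rfl⟩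
          refine Or.inr ⟨_, _, Relation.ReflTransGen.refl,
            Trans.res (Trans.pre _ _) ha,
            Or.inr (Or.inr ⟨_, hq', rfl, rfl⟩),
            Or.inl (brBisim_symm (hP _ hq' _ hL))⟩
        | parR hstep' hn' =>
          rcases hq' _ Relation.ReflTransGen.refl _ _ hstep' with ⟨h, hh, rfl⟩
          exact absurd hh (hnAH h rfl)
        | sync h1 h2 hx =>
          exact absurd hx (hnotL _ rfl)

/-- SBrSNNI, P_BrNDC and SBrNDC are compositional w.r.t.
prefixing by a low-level or unobservable action. -/
theorem prefix_compositionality {A C : Type} (env : C → Proc A C)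
    (hguard : ∀ c, Guarded (env c)) (AH : Set A)
    (a : Option A) (ha : ∀ x, a = some x → x ∉ AH) (P : Proc A C) :
    (SBrSNNI env AH P → SBrSNNI env AH (Proc.pre a P)) ∧
    (PBrNDC env AH P → PBrNDC env AH (Proc.pre a P)) ∧
    (SBrNDC env AH P → SBrNDC env AH (Proc.pre a P)) := by
  refine ⟨?_, ?_, ?_⟩
  · intro hP p' hr
    rcases reach_pre_inv hr with rfl | hr'
    · exact brSNNI_pre ha (hP P Relation.ReflTransGen.refl)
    · exact hP p' hr'
  · intro hP p' hr
    rcases reach_pre_inv hr with rfl | hr'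
    · exact brNDC_pre ha (hP P Relation.ReflTransGen.refl)
    · exact hP p' hr'
  · intro hP p' p'' hr h hh hstep
    rcases reach_pre_inv hr with rfl | hr'
    · rcases trans_pre_inv hstep with ⟨ha', rfl⟩
      exact absurd hh (ha h ha'.symm)
    · exact hP p' p'' hr' h hh hstep

end SecurityNI
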